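/- arXiv:1612.02354 — 2 statements merged into one kernel-verified Lean document; each statement's English description precedes it below -/
import Mathlib

section
/- Let φ ∈ L²(ℝ³) with (1+|x|)³ φ ∈ L¹(ℝ³) and ∫ φ(x) dx = 0. Then there is a constant C such that for all κ > 0: |⟨φ, (-Δ+κ²)^{-3} φ⟩| ≤ C κ^{-1} and |⟨φ, (-Δ+κ²)^{-4} φ⟩| ≤ C κ^{-3}. -/
open MeasureTheory FourierTransform

noncomputable section

abbrev R3 := EuclideanSpace ℝ (Fin 3)

open Real RealInnerProductSpace in
private lemma norm_exp_I_sub_one_le_aux (θ : ℝ) :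
    ‖Complex.exp (θ * Complex.I) - 1‖ ≤ |θ| := by
  rw [Complex.exp_mul_I]
  have h : (Complex.cos θ + Complex.sin θ * Complex.I - 1)
      = ((Real.cos θ - 1 : ℝ) : ℂ) + ((Real.sin θ : ℝ) : ℂ) * Complex.I := by
    push_cast; ring
  rw [h, Complex.norm_eq_sqrt_sq_add_sq]
  have hre : (((Real.cos θ - 1 : ℝ) : ℂ) + ((Real.sin θ : ℝ) : ℂ) * Complex.I).re
      = Real.cos θ - 1 := by
    simp only [Complex.add_re, Complex.ofReal_re, Complex.mul_re, Complex.I_re,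
      Complex.ofReal_im, Complex.I_im]; ring
  have him : (((Real.cos θ - 1 : ℝ) : ℂ) + ((Real.sin θ : ℝ) : ℂ) * Complex.I).im
      = Real.sin θ := by
    simp only [Complex.add_im, Complex.ofReal_im, Complex.mul_im, Complex.ofReal_re,
      Complex.I_re, Complex.I_im]; ring
  rw [hre, him]
  have h3 : 2 - 2 * Real.cos θ ≤ θ ^ 2 := by
    have h1 := Real.cos_two_mul (θ/2)
    have h2 := Real.sin_sq_add_cos_sq (θ/2)
    have h4 : Real.sin (θ/2) ^ 2 ≤ (θ/2) ^ 2 := Real.sin_sq_le_sq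
    have h5 : (2:ℝ) * (θ/2) = θ := by ring
    rw [h5] at h1
    nlinarith
  have h2 : (Real.cos θ - 1) ^ 2 + Real.sin θ ^ 2 = 2 - 2 * Real.cos θ := by
    nlinarith [Real.sin_sq_add_cos_sq θ]
  rw [h2]
  calc Real.sqrt (2 - 2 * Real.cos θ) ≤ Real.sqrt (θ ^ 2) := Real.sqrt_le_sqrt h3
    _ = |θ| := Real.sqrt_sq_eq_abs θ

private lemma scale_pt3 (κ : ℝ) (hκ : 0 < κ) (x : R3) :
    ‖(κ⁻¹ • x)‖ ^ 2 / (‖κ⁻¹ • x‖ ^ 2 + 1) ^ 3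
      = κ ^ 4 * (‖x‖ ^ 2 / (‖x‖ ^ 2 + κ ^ 2) ^ 3) := by
  have hκ0 : κ ≠ 0 := ne_of_gt hκ
  have hd : ‖x‖ ^ 2 + κ ^ 2 ≠ 0 := by positivity
  rw [norm_smul, Real.norm_eq_abs, abs_of_pos (inv_pos.2 hκ)]
  field_simp

private lemma scale_pt4 (κ : ℝ) (hκ : 0 < κ) (x : R3) :
    ‖(κ⁻¹ • x)‖ ^ 2 / (‖κ⁻¹ • x‖ ^ 2 + 1) ^ 4
      = κ ^ 6 * (‖x‖ ^ 2 / (‖x‖ ^ 2 + κ ^ 2) ^ 4) := by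
  have hκ0 : κ ≠ 0 := ne_of_gt hκ
  have hd : ‖x‖ ^ 2 + κ ^ 2 ≠ 0 := by positivity
  rw [norm_smul, Real.norm_eq_abs, abs_of_pos (inv_pos.2 hκ)]
  field_simp

private lemma scale_int3 (κ : ℝ) (hκ : 0 < κ) :
    ∫ k : R3, ‖k‖ ^ 2 / (‖k‖ ^ 2 + κ ^ 2) ^ 3
      = κ⁻¹ * ∫ u : R3, ‖u‖ ^ 2 / (‖u‖ ^ 2 + 1) ^ 3 := by
  have h := MeasureTheory.Measure.integral_comp_inv_smul (volume : Measure R3)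
    (fun u : R3 => ‖u‖ ^ 2 / (‖u‖ ^ 2 + 1) ^ 3) κ
  have hκ0 : κ ≠ 0 := ne_of_gt hκ
  simp only [scale_pt3 κ hκ] at h
  rw [integral_const_mul] at h
  have hfr : Module.finrank ℝ R3 = 3 := by simp
  rw [hfr, abs_of_pos (by positivity : (0:ℝ) < κ ^ 3), smul_eq_mul] at h
  have h' : κ ^ 3 * (κ * ∫ k : R3, ‖k‖ ^ 2 / (‖k‖ ^ 2 + κ ^ 2) ^ 3)
      = κ ^ 3 * ∫ u : R3, ‖u‖ ^ 2 / (‖u‖ ^ 2 + 1) ^ 3 := by rw [← h]; ring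
  have h'' := mul_left_cancel₀ (pow_ne_zero 3 hκ0) h'
  rw [eq_inv_mul_iff_mul_eq₀ hκ0]
  exact h''

private lemma scale_int4 (κ : ℝ) (hκ : 0 < κ) :
    ∫ k : R3, ‖k‖ ^ 2 / (‖k‖ ^ 2 + κ ^ 2) ^ 4
      = (κ ^ 3)⁻¹ * ∫ u : R3, ‖u‖ ^ 2 / (‖u‖ ^ 2 + 1) ^ 4 := by
  have h := MeasureTheory.Measure.integral_comp_inv_smul (volume : Measure R3)
    (fun u : R3 => ‖u‖ ^ 2 / (‖u‖ ^ 2 + 1) ^ 4) κ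
  have hκ0 : κ ≠ 0 := ne_of_gt hκ
  simp only [scale_pt4 κ hκ] at h
  rw [integral_const_mul] at h
  have hfr : Module.finrank ℝ R3 = 3 := by simp
  rw [hfr, abs_of_pos (by positivity : (0:ℝ) < κ ^ 3), smul_eq_mul] at h
  have h' : κ ^ 3 * (κ ^ 3 * ∫ k : R3, ‖k‖ ^ 2 / (‖k‖ ^ 2 + κ ^ 2) ^ 4)
      = κ ^ 3 * ∫ u : R3, ‖u‖ ^ 2 / (‖u‖ ^ 2 + 1) ^ 4 := by rw [← h]; ring
  have h'' := mul_left_cancel₀ (pow_ne_zero 3 hκ0) h'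
  rw [eq_inv_mul_iff_mul_eq₀ (pow_ne_zero 3 hκ0)]
  exact h''

private lemma int_f3 : Integrable (fun u : R3 => ‖u‖ ^ 2 / (‖u‖ ^ 2 + 1) ^ 3)
    (volume : Measure R3) := by
  have h := integrable_rpow_neg_one_add_norm_sq (E := R3) (μ := volume)
    (r := 4) (by simp; norm_num : ((Module.finrank ℝ R3 : ℝ)) < 4)
  have hcont : Continuous (fun u : R3 => ‖u‖ ^ 2 / (‖u‖ ^ 2 + 1) ^ 3) := by
    apply Continuous.div ((continuous_norm).pow 2)
      (((continuous_norm.pow 2).add continuous_const).pow 3)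
    intro x; simp only [Pi.pow_apply, Pi.add_apply]; positivity
  refine h.mono' hcont.aestronglyMeasurable (Filter.Eventually.of_forall fun u => ?_)
  have ht : (0:ℝ) < 1 + ‖u‖ ^ 2 := by positivity
  have h2 : ((1:ℝ) + ‖u‖ ^ 2) ^ (-(4:ℝ)/2) = (((1:ℝ) + ‖u‖ ^ 2) ^ (2:ℕ))⁻¹ := by
    rw [show -(4:ℝ)/2 = -((2:ℕ):ℝ) by norm_num, Real.rpow_neg ht.le, Real.rpow_natCast]
  rw [Real.norm_eq_abs, abs_of_nonneg (by positivity), h2]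
  have hD : (0:ℝ) < ‖u‖ ^ 2 + 1 := by positivity
  have h3 : (((1:ℝ) + ‖u‖ ^ 2) ^ (2:ℕ))⁻¹ = (‖u‖ ^ 2 + 1) / (‖u‖ ^ 2 + 1) ^ 3 := by
    rw [add_comm]; field_simp
  rw [h3]
  exact div_le_div₀ hD.le (by linarith) (by positivity) le_rfl

private lemma int_f4 : Integrable (fun u : R3 => ‖u‖ ^ 2 / (‖u‖ ^ 2 + 1) ^ 4)
    (volume : Measure R3) := by
  refine int_f3.mono' ?_ (Filter.Eventually.of_forall fun u => ?_)
  · apply Continuous.aestronglyMeasurable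
    apply Continuous.div ((continuous_norm).pow 2)
      (((continuous_norm.pow 2).add continuous_const).pow 4)
    intro x; simp only [Pi.pow_apply, Pi.add_apply]; positivity
  · have hD : (1:ℝ) ≤ ‖u‖ ^ 2 + 1 := by nlinarith [sq_nonneg ‖u‖]
    rw [Real.norm_eq_abs, abs_of_nonneg (by positivity)]
    exact div_le_div_of_nonneg_left (by positivity) (by positivity)
      (pow_le_pow_right₀ (by linarith) (by norm_num))

private lemma int_scaled3 (κ : ℝ) (hκ : 0 < κ) :
    Integrable (fun k : R3 => ‖k‖ ^ 2 / (‖k‖ ^ 2 + κ ^ 2) ^ 3) (volume : Measure R3) := by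
  have hκ0 : κ ≠ 0 := ne_of_gt hκ
  have h := (int_f3.comp_smul (R := κ⁻¹) (inv_ne_zero hκ0)).const_mul ((κ ^ 4)⁻¹)
  refine h.congr (Filter.Eventually.of_forall fun x => ?_)
  simp only
  rw [scale_pt3 κ hκ x, ← mul_assoc, inv_mul_cancel₀ (by positivity), one_mul]

private lemma int_scaled4 (κ : ℝ) (hκ : 0 < κ) :
    Integrable (fun k : R3 => ‖k‖ ^ 2 / (‖k‖ ^ 2 + κ ^ 2) ^ 4) (volume : Measure R3) := by
  have hκ0 : κ ≠ 0 := ne_of_gt hκ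
  have h := (int_f4.comp_smul (R := κ⁻¹) (inv_ne_zero hκ0)).const_mul ((κ ^ 6)⁻¹)
  refine h.congr (Filter.Eventually.of_forall fun x => ?_)
  simp only
  rw [scale_pt4 κ hκ x, ← mul_assoc, inv_mul_cancel₀ (by positivity), one_mul]

open Real RealInnerProductSpace in
private lemma fourier_bound (φ : R3 → ℂ) (hφ1 : Integrable φ)
    (hxφ : Integrable (fun x : R3 => ‖x‖ * ‖φ x‖) volume)
    (hφ0 : (∫ x : R3, φ x) = 0) (k : R3) :
    ‖𝓕 φ k‖ ≤ 2 * π * (∫ x : R3, ‖x‖ * ‖φ x‖) * ‖k‖ := by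
  rw [Real.fourier_eq']
  set c : R3 → ℂ := fun v => Complex.exp (((-2 * π * ⟪v, k⟫ : ℝ) : ℂ) * Complex.I) with hc
  have hcont : Continuous c := by
    apply Complex.continuous_exp.comp
    apply Continuous.mul ?_ continuous_const
    exact Complex.continuous_ofReal.comp
      (Continuous.mul continuous_const ((continuous_id.inner continuous_const)))
  have hint : Integrable (fun v => c v * φ v) :=
    hφ1.bdd_mul hcont.aestronglyMeasurable
      (Filter.Eventually.of_forall fun v => le_of_eq
        (by rw [hc, Complex.norm_exp_ofReal_mul_I] : ‖c v‖ = 1))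
  have h1 : Integrable (fun v => (c v - 1) * φ v) := by
    have := hint.sub hφ1
    simpa [sub_mul, Pi.sub_def] using this
  have heq : (∫ v : R3, c v • φ v) = ∫ v : R3, (c v - 1) * φ v := by
    simp only [smul_eq_mul]
    calc ∫ v, c v * φ v = ∫ v, ((c v - 1) * φ v + φ v) := by congr 1; funext v; ring
      _ = (∫ v, (c v - 1) * φ v) + ∫ v, φ v := integral_add h1 hφ1
      _ = _ := by rw [hφ0, add_zero]
  rw [heq]
  have hptw : ∀ v : R3, ‖(c v - 1) * φ v‖ ≤ (2 * π * ‖k‖) * (‖v‖ * ‖φ v‖) := by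
    intro v
    rw [norm_mul]
    have hb : ‖c v - 1‖ ≤ 2 * π * ‖v‖ * ‖k‖ := by
      refine (norm_exp_I_sub_one_le_aux _).trans ?_
      rw [abs_mul, abs_mul]
      have := abs_real_inner_le_norm v k
      have hπ : (0:ℝ) < π := Real.pi_pos
      calc |(-2)| * |π| * |⟪v, k⟫| = 2 * π * |⟪v, k⟫| := by
            rw [abs_of_pos hπ]; norm_num
        _ ≤ 2 * π * (‖v‖ * ‖k‖) := by nlinarith
        _ = 2 * π * ‖v‖ * ‖k‖ := by ring
    calc ‖c v - 1‖ * ‖φ v‖ ≤ (2 * π * ‖v‖ * ‖k‖) * ‖φ v‖ :=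
          mul_le_mul_of_nonneg_right hb (norm_nonneg _)
      _ = (2 * π * ‖k‖) * (‖v‖ * ‖φ v‖) := by ring
  calc ‖∫ v : R3, (c v - 1) * φ v‖ ≤ ∫ v : R3, ‖(c v - 1) * φ v‖ :=
        norm_integral_le_integral_norm _
    _ ≤ ∫ v : R3, (2 * π * ‖k‖) * (‖v‖ * ‖φ v‖) :=
        integral_mono h1.norm (hxφ.const_mul _) hptw
    _ = 2 * π * (∫ x : R3, ‖x‖ * ‖φ x‖) * ‖k‖ := by rw [integral_const_mul]; ring

/-- For `φ ∈ L²(ℝ³)` with `(1+|x|)³ φ ∈ L¹` and `∫ φ = 0`, there is a constant `C` such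
that for all `κ > 0`: `|⟨φ, (-Δ+κ²)^{-3} φ⟩| ≤ C κ⁻¹` and `|⟨φ, (-Δ+κ²)^{-4} φ⟩| ≤ C κ⁻³`,
where the resolvent powers are expressed via the Fourier multiplier `(k²+κ²)^{-n}`. -/
theorem resolvent_cube_and_fourth_power_bounds
    (φ : R3 → ℂ) (hφ2 : MemLp φ 2 volume)
    (hφw : Integrable (fun x : R3 => (1 + ‖x‖) ^ 3 * ‖φ x‖) volume)
    (hφ0 : (∫ x : R3, φ x) = 0) :
    ∃ C : ℝ, ∀ κ : ℝ, 0 < κ →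
      |∫ k : R3, ‖𝓕 φ k‖ ^ 2 / (‖k‖ ^ 2 + κ ^ 2) ^ 3| ≤ C * κ⁻¹ ∧
      |∫ k : R3, ‖𝓕 φ k‖ ^ 2 / (‖k‖ ^ 2 + κ ^ 2) ^ 4| ≤ C * (κ ^ 3)⁻¹ := by
  have hφ1 : Integrable φ := by
    refine hφw.mono' hφ2.aestronglyMeasurable (Filter.Eventually.of_forall fun x => ?_)
    have hx : (0:ℝ) ≤ ‖x‖ := norm_nonneg x
    nlinarith [norm_nonneg (φ x), mul_nonneg hx (norm_nonneg (φ x)),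
      mul_nonneg (mul_nonneg hx hx) (norm_nonneg (φ x)),
      mul_nonneg (mul_nonneg (mul_nonneg hx hx) hx) (norm_nonneg (φ x))]
  have hxφ : Integrable (fun x : R3 => ‖x‖ * ‖φ x‖) volume := by
    refine hφw.mono' ?_ (Filter.Eventually.of_forall fun x => ?_)
    · exact continuous_norm.aestronglyMeasurable.mul hφ2.aestronglyMeasurable.norm
    · have hx : (0:ℝ) ≤ ‖x‖ := norm_nonneg x
      rw [Real.norm_eq_abs, abs_of_nonneg (by positivity)]
      nlinarith [norm_nonneg (φ x), mul_nonneg hx (norm_nonneg (φ x)),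
        mul_nonneg (mul_nonneg hx hx) (norm_nonneg (φ x)),
        mul_nonneg (mul_nonneg (mul_nonneg hx hx) hx) (norm_nonneg (φ x))]
  set L : ℝ := 2 * Real.pi * (∫ x : R3, ‖x‖ * ‖φ x‖) with hL
  have hL0 : 0 ≤ L := by
    have : 0 ≤ ∫ x : R3, ‖x‖ * ‖φ x‖ :=
      integral_nonneg fun x => by positivity
    have hπ := Real.pi_pos
    positivity
  have hF2 : ∀ k : R3, ‖𝓕 φ k‖ ^ 2 ≤ L ^ 2 * ‖k‖ ^ 2 := by
    intro k
    have h := fourier_bound φ hφ1 hxφ hφ0 k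
    calc ‖𝓕 φ k‖ ^ 2 ≤ (L * ‖k‖) ^ 2 := by
          apply pow_le_pow_left₀ (norm_nonneg _)
          exact h
      _ = L ^ 2 * ‖k‖ ^ 2 := by ring
  have hcontF : Continuous (𝓕 φ) :=
    VectorFourier.fourierIntegral_continuous Real.continuous_fourierChar
      (by exact continuous_inner (𝕜 := ℝ) (E := R3)) hφ1
  set c3 : ℝ := ∫ u : R3, ‖u‖ ^ 2 / (‖u‖ ^ 2 + 1) ^ 3 with hc3
  set c4 : ℝ := ∫ u : R3, ‖u‖ ^ 2 / (‖u‖ ^ 2 + 1) ^ 4 with hc4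
  have hc30 : 0 ≤ c3 := integral_nonneg fun u => by positivity
  have hc40 : 0 ≤ c4 := integral_nonneg fun u => by positivity
  refine ⟨L ^ 2 * c3 + L ^ 2 * c4, fun κ hκ => ?_⟩
  have hκ0 : κ ≠ 0 := ne_of_gt hκ
  have hκi : (0:ℝ) ≤ κ⁻¹ := by positivity
  have hκi3 : (0:ℝ) ≤ (κ ^ 3)⁻¹ := by positivity
  -- common machinery for both exponents
  have key : ∀ n : ℕ,
      Integrable (fun k : R3 => ‖k‖ ^ 2 / (‖k‖ ^ 2 + κ ^ 2) ^ n) volume →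
      |∫ k : R3, ‖𝓕 φ k‖ ^ 2 / (‖k‖ ^ 2 + κ ^ 2) ^ n|
        ≤ L ^ 2 * ∫ k : R3, ‖k‖ ^ 2 / (‖k‖ ^ 2 + κ ^ 2) ^ n := by
    intro n hsc
    have hmeas : AEStronglyMeasurable (fun k : R3 => ‖𝓕 φ k‖ ^ 2 / (‖k‖ ^ 2 + κ ^ 2) ^ n)
        volume := by
      apply Continuous.aestronglyMeasurable
      apply Continuous.div ((hcontF.norm).pow 2)
        (((continuous_norm.pow 2).add continuous_const).pow n)
      intro x
      simp only [Pi.pow_apply, Pi.add_apply]; positivity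
    have hptw : ∀ k : R3, ‖𝓕 φ k‖ ^ 2 / (‖k‖ ^ 2 + κ ^ 2) ^ n
        ≤ L ^ 2 * (‖k‖ ^ 2 / (‖k‖ ^ 2 + κ ^ 2) ^ n) := by
      intro k
      have hD : (0:ℝ) < ‖k‖ ^ 2 + κ ^ 2 :=
        add_pos_of_nonneg_of_pos (by positivity) (pow_pos hκ 2)
      calc ‖𝓕 φ k‖ ^ 2 / (‖k‖ ^ 2 + κ ^ 2) ^ n
          ≤ (L ^ 2 * ‖k‖ ^ 2) / (‖k‖ ^ 2 + κ ^ 2) ^ n :=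
            div_le_div₀ (by positivity) (hF2 k) (pow_pos hD n) le_rfl
        _ = L ^ 2 * (‖k‖ ^ 2 / (‖k‖ ^ 2 + κ ^ 2) ^ n) := by ring
    have hmain : Integrable (fun k : R3 => ‖𝓕 φ k‖ ^ 2 / (‖k‖ ^ 2 + κ ^ 2) ^ n) volume := by
      refine (hsc.const_mul (L ^ 2)).mono' hmeas (Filter.Eventually.of_forall fun k => ?_)
      rw [Real.norm_eq_abs, abs_of_nonneg (by positivity)]
      exact hptw k
    have hnn : 0 ≤ ∫ k : R3, ‖𝓕 φ k‖ ^ 2 / (‖k‖ ^ 2 + κ ^ 2) ^ n :=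
      integral_nonneg fun k => by positivity
    rw [abs_of_nonneg hnn]
    calc (∫ k : R3, ‖𝓕 φ k‖ ^ 2 / (‖k‖ ^ 2 + κ ^ 2) ^ n)
        ≤ ∫ k : R3, L ^ 2 * (‖k‖ ^ 2 / (‖k‖ ^ 2 + κ ^ 2) ^ n) :=
          integral_mono hmain (hsc.const_mul _) hptw
      _ = L ^ 2 * ∫ k : R3, ‖k‖ ^ 2 / (‖k‖ ^ 2 + κ ^ 2) ^ n := integral_const_mul _ _
  constructor
  · have h := key 3 (int_scaled3 κ hκ)
    rw [scale_int3 κ hκ, ← hc3] at h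
    refine h.trans ?_
    have h0 : 0 ≤ L ^ 2 * c4 * κ⁻¹ :=
      mul_nonneg (mul_nonneg (sq_nonneg L) hc40) hκi
    nlinarith
  · have h := key 4 (int_scaled4 κ hκ)
    rw [scale_int4 κ hκ, ← hc4] at h
    refine h.trans ?_
    have h0 : 0 ≤ L ^ 2 * c3 * (κ ^ 3)⁻¹ :=
      mul_nonneg (mul_nonneg (sq_nonneg L) hc30) hκi3
    nlinarith

end
end

section
/- Let H_a be self-adjoint on a Hilbert space, ε : ℝ → ℝ measurable with |ε(t)| ≤ C₁ η |t - t_a| for a fixed t_a, and suppose |⟨ς, e^{-itH_a} ς⟩| ≤ C₂(1+|t|)^{-5/2} for a unit vector ς. Then for t_c ≤ t_a ≤ t_c' the double integral I₄ = ∫_{t_a}^{t_c'} ∫_{t_c}^{t_a} |ε(u)| |ε(v)| |⟨ς, e^{-i(u-v)H_a} ς⟩| dv du satisfies I₄ ≤ C η² · (16/9) · (1 + (t_c'-t_a))^{3/4} (1 + (t_a - t_c))^{3/4}. In particular, if t_c' - t_a and t_a - t_c are of order η^{-1}, then I₄ = O(η^{1/2}). -/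
open MeasureTheory Real

noncomputable section


lemma aux_decouple {x y : ℝ} (hx : 0 ≤ x) (hy : 0 ≤ y) :
    (1 + (x + y)) ^ (-(5:ℝ)/2) ≤ (1+x) ^ (-(5:ℝ)/4) * (1+y) ^ (-(5:ℝ)/4) := by
  have h1 : (0:ℝ) < 1 + x := by linarith
  have h2 : (0:ℝ) < 1 + y := by linarith
  have h3 : (0:ℝ) < 1 + (x+y) := by linarith
  have key : (1+x)*(1+y) ≤ (1+(x+y))^2 := by nlinarith
  calc (1 + (x + y)) ^ (-(5:ℝ)/2)
      = (((1+(x+y))^2 : ℝ)) ^ (-(5:ℝ)/4) := by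
        rw [← Real.rpow_natCast (1+(x+y)) 2, ← Real.rpow_mul h3.le]; norm_num
    _ ≤ ((1+x)*(1+y)) ^ (-(5:ℝ)/4) :=
        Real.rpow_le_rpow_of_nonpos (by positivity) key (by norm_num)
    _ = (1+x) ^ (-(5:ℝ)/4) * (1+y) ^ (-(5:ℝ)/4) :=
        Real.mul_rpow h1.le h2.le

lemma aux_absorb {x : ℝ} (hx : 0 ≤ x) :
    x * (1+x) ^ (-(5:ℝ)/4) ≤ (1+x) ^ (-(1:ℝ)/4) := by
  have h1 : (0:ℝ) < 1 + x := by linarith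
  calc x * (1+x) ^ (-(5:ℝ)/4) ≤ (1+x) * (1+x) ^ (-(5:ℝ)/4) := by
        apply mul_le_mul_of_nonneg_right (by linarith) (Real.rpow_nonneg h1.le _)
    _ = (1+x) ^ (-(1:ℝ)/4) := by
        nth_rewrite 1 [← Real.rpow_one (1+x)]
        rw [← Real.rpow_add h1]; norm_num

lemma aux_core {x y : ℝ} (hx : 0 ≤ x) (hy : 0 ≤ y) :
    x * y * (1 + (x + y)) ^ (-(5:ℝ)/2) ≤ (1+x) ^ (-(1:ℝ)/4) * (1+y) ^ (-(1:ℝ)/4) := by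
  calc x * y * (1 + (x + y)) ^ (-(5:ℝ)/2)
      ≤ x * y * ((1+x) ^ (-(5:ℝ)/4) * (1+y) ^ (-(5:ℝ)/4)) :=
        mul_le_mul_of_nonneg_left (aux_decouple hx hy) (by positivity)
    _ = (x * (1+x) ^ (-(5:ℝ)/4)) * (y * (1+y) ^ (-(5:ℝ)/4)) := by ring
    _ ≤ (1+x) ^ (-(1:ℝ)/4) * (1+y) ^ (-(1:ℝ)/4) := by
        apply mul_le_mul (aux_absorb hx) (aux_absorb hy)
          (by positivity) (Real.rpow_nonneg (by linarith) _)

lemma aux_int {T : ℝ} (hT : 0 ≤ T) :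
    ∫ s in (0:ℝ)..T, (1+s) ^ (-(1:ℝ)/4) ≤ (4/3) * (1+T) ^ ((3:ℝ)/4) := by
  have h1 : ∫ s in (0:ℝ)..T, (1+s) ^ (-(1:ℝ)/4)
      = ∫ x in (1:ℝ)..(1+T), x ^ (-(1:ℝ)/4) := by
    simpa using intervalIntegral.integral_comp_add_left (a := 0) (b := T) (fun x => x ^ (-(1:ℝ)/4)) 1
  rw [h1, integral_rpow (Or.inl (by norm_num))]
  have h2 : (0:ℝ) ≤ (1+T) ^ ((3:ℝ)/4) := Real.rpow_nonneg (by linarith) _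
  rw [Real.one_rpow]
  have : (-(1:ℝ)/4 + 1) = 3/4 := by norm_num
  rw [this]
  linarith

lemma aux_cont {a b c : ℝ} (hab : a ≤ b) :
    IntervalIntegrable (fun v : ℝ => c * (1 + (b - v)) ^ (-(1:ℝ)/4)) volume a b := by
  apply ContinuousOn.intervalIntegrable
  apply continuousOn_const.mul
  apply ContinuousOn.rpow_const (by fun_prop)
  intro x hx
  rw [Set.uIcc_of_le hab] at hx
  left
  have := hx.2
  intro h; nlinarith [hx.2]

lemma aux_cont2 {a b c : ℝ} (hab : a ≤ b) :
    IntervalIntegrable (fun u : ℝ => c * (1 + (u - a)) ^ (-(1:ℝ)/4)) volume a b := by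
  apply ContinuousOn.intervalIntegrable
  apply continuousOn_const.mul
  apply ContinuousOn.rpow_const (by fun_prop)
  intro x hx
  rw [Set.uIcc_of_le hab] at hx
  left
  intro h; nlinarith [hx.1]


/-- Bound on the double integral `I₄`: if `|ε(t)| ≤ C₁η|t-t_a|` and the matrix element
`⟨ς, e^{-itH_a}ς⟩` (here written via the unitary group `W`) decays like
`C₂(1+|t|)^{-5/2}`, then for `t_c ≤ t_a ≤ t_c'`,
`I₄ ≤ C₁²C₂ η² (16/9) (1+(t_c'-t_a))^{3/4} (1+(t_a-t_c))^{3/4}`. -/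
theorem double_integral_I4_bound
    {H : Type*} [NormedAddCommGroup H] [InnerProductSpace ℂ H] [CompleteSpace H]
    (W : ℝ → H →L[ℂ] H) (hW0 : W 0 = 1)
    (hWgrp : ∀ s t : ℝ, W (s + t) = (W s).comp (W t))
    (hWunit : ∀ t : ℝ, (W t).comp (ContinuousLinearMap.adjoint (W t)) = 1)
    (ς : H) (hς : ‖ς‖ = 1)
    (ε : ℝ → ℝ) (hmeas : Measurable ε)
    (C₁ C₂ η ta tc tc' : ℝ) (hC₁ : 0 ≤ C₁) (hC₂ : 0 ≤ C₂) (hη : 0 < η)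
    (hε : ∀ t : ℝ, |ε t| ≤ C₁ * η * |t - ta|)
    (hdisp : ∀ t : ℝ, ‖(inner ℂ ς (W t ς) : ℂ)‖ ≤ C₂ * (1 + |t|) ^ (-(5 : ℝ) / 2))
    (h1 : tc ≤ ta) (h2 : ta ≤ tc') :
    (∫ u in ta..tc', ∫ v in tc..ta, |ε u| * |ε v| * ‖(inner ℂ ς (W (u - v) ς) : ℂ)‖)
      ≤ C₁ ^ 2 * C₂ * η ^ 2 * (16 / 9) *
        (1 + (tc' - ta)) ^ ((3 : ℝ) / 4) * (1 + (ta - tc)) ^ ((3 : ℝ) / 4) := by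
  set K : ℝ := C₁ ^ 2 * C₂ * η ^ 2 with hK
  have hKpos : 0 ≤ K := by positivity
  have hrpow1 : (0:ℝ) ≤ (1 + (ta - tc)) ^ ((3:ℝ)/4) := Real.rpow_nonneg (by linarith) _
  have hrpow2 : (0:ℝ) ≤ (1 + (tc' - ta)) ^ ((3:ℝ)/4) := Real.rpow_nonneg (by linarith) _
  have hRHS : (0:ℝ) ≤ C₁ ^ 2 * C₂ * η ^ 2 * (16 / 9) *
        (1 + (tc' - ta)) ^ ((3 : ℝ) / 4) * (1 + (ta - tc)) ^ ((3 : ℝ) / 4) := by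
    have : (0:ℝ) ≤ C₁ ^ 2 * C₂ * η ^ 2 * (16/9) := by positivity
    exact mul_nonneg (mul_nonneg this hrpow2) hrpow1
  set C : ℝ := K * ((4/3) * (1 + (ta - tc)) ^ ((3:ℝ)/4)) with hC
  have hCpos : 0 ≤ C := by
    apply mul_nonneg hKpos; positivity
  -- inner v-integral bound constant
  have hvint : ∫ v in tc..ta, (1 + (ta - v)) ^ (-(1:ℝ)/4)
      ≤ (4/3) * (1 + (ta - tc)) ^ ((3:ℝ)/4) := by
    have hsub : ∫ v in tc..ta, (1 + (ta - v)) ^ (-(1:ℝ)/4)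
        = ∫ s in (0:ℝ)..(ta - tc), (1+s) ^ (-(1:ℝ)/4) := by
      simpa using intervalIntegral.integral_comp_sub_left (a := tc) (b := ta)
        (fun s => (1+s) ^ (-(1:ℝ)/4)) ta
    rw [hsub]; exact aux_int (by linarith)
  -- pointwise bound on inner integral
  have hinner : ∀ u ∈ Set.Icc ta tc',
      (∫ v in tc..ta, |ε u| * |ε v| * ‖(inner ℂ ς (W (u - v) ς) : ℂ)‖)
        ≤ C * (1 + (u - ta)) ^ (-(1:ℝ)/4) := by
    intro u hu
    have hx : 0 ≤ u - ta := by linarith [hu.1]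
    have hA : (0:ℝ) ≤ (1 + (u - ta)) ^ (-(1:ℝ)/4) := Real.rpow_nonneg (by linarith) _
    by_cases hint : IntervalIntegrable
        (fun v => |ε u| * |ε v| * ‖(inner ℂ ς (W (u - v) ς) : ℂ)‖) volume tc ta
    · have hpt : ∀ v ∈ Set.Icc tc ta,
          |ε u| * |ε v| * ‖(inner ℂ ς (W (u - v) ς) : ℂ)‖
            ≤ K * (1 + (u - ta)) ^ (-(1:ℝ)/4) * (1 + (ta - v)) ^ (-(1:ℝ)/4) := by
        intro v hv
        have hy : 0 ≤ ta - v := by linarith [hv.2]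
        have e1 : |ε u| ≤ C₁ * η * (u - ta) := by
          have := hε u; rwa [abs_of_nonneg hx] at this
        have e2 : |ε v| ≤ C₁ * η * (ta - v) := by
          have := hε v
          rwa [show |v - ta| = ta - v by rw [abs_of_nonpos (by linarith)]; ring] at this
        have e3 : ‖(inner ℂ ς (W (u - v) ς) : ℂ)‖
            ≤ C₂ * (1 + ((u - ta) + (ta - v))) ^ (-(5:ℝ)/2) := by
          have := hdisp (u - v)
          rwa [show |u - v| = (u - ta) + (ta - v) by
            rw [abs_of_nonneg (by linarith)]; ring] at this
        have n1 : (0:ℝ) ≤ C₁ * η * (u - ta) := (abs_nonneg _).trans e1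
        have n2 : (0:ℝ) ≤ C₁ * η * (ta - v) := (abs_nonneg _).trans e2
        calc |ε u| * |ε v| * ‖(inner ℂ ς (W (u - v) ς) : ℂ)‖
            ≤ (C₁ * η * (u - ta)) * (C₁ * η * (ta - v)) *
              (C₂ * (1 + ((u - ta) + (ta - v))) ^ (-(5:ℝ)/2)) := by
              apply mul_le_mul
                (mul_le_mul e1 e2 (abs_nonneg _) n1) e3 (norm_nonneg _)
                (mul_nonneg n1 n2)
          _ = K * ((u - ta) * (ta - v) * (1 + ((u - ta) + (ta - v))) ^ (-(5:ℝ)/2)) := by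
              rw [hK]; ring
          _ ≤ K * ((1 + (u - ta)) ^ (-(1:ℝ)/4) * (1 + (ta - v)) ^ (-(1:ℝ)/4)) :=
              mul_le_mul_of_nonneg_left (aux_core hx hy) hKpos
          _ = K * (1 + (u - ta)) ^ (-(1:ℝ)/4) * (1 + (ta - v)) ^ (-(1:ℝ)/4) := by ring
      calc (∫ v in tc..ta, |ε u| * |ε v| * ‖(inner ℂ ς (W (u - v) ς) : ℂ)‖)
          ≤ ∫ v in tc..ta,
            K * (1 + (u - ta)) ^ (-(1:ℝ)/4) * (1 + (ta - v)) ^ (-(1:ℝ)/4) :=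
            intervalIntegral.integral_mono_on h1 hint (aux_cont h1) hpt
        _ = (K * (1 + (u - ta)) ^ (-(1:ℝ)/4)) *
            ∫ v in tc..ta, (1 + (ta - v)) ^ (-(1:ℝ)/4) := by
            rw [← intervalIntegral.integral_const_mul]
        _ ≤ (K * (1 + (u - ta)) ^ (-(1:ℝ)/4)) *
            ((4/3) * (1 + (ta - tc)) ^ ((3:ℝ)/4)) :=
            mul_le_mul_of_nonneg_left hvint (mul_nonneg hKpos hA)
        _ = C * (1 + (u - ta)) ^ (-(1:ℝ)/4) := by rw [hC]; ring
    · rw [intervalIntegral.integral_undef hint]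
      exact mul_nonneg hCpos hA
  -- outer integral
  by_cases hout : IntervalIntegrable
      (fun u => ∫ v in tc..ta, |ε u| * |ε v| * ‖(inner ℂ ς (W (u - v) ς) : ℂ)‖)
      volume ta tc'
  · have huint : ∫ u in ta..tc', (1 + (u - ta)) ^ (-(1:ℝ)/4)
        ≤ (4/3) * (1 + (tc' - ta)) ^ ((3:ℝ)/4) := by
      have hsub : ∫ u in ta..tc', (1 + (u - ta)) ^ (-(1:ℝ)/4)
          = ∫ s in (0:ℝ)..(tc' - ta), (1+s) ^ (-(1:ℝ)/4) := by
        simpa using intervalIntegral.integral_comp_sub_right (a := ta) (b := tc')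
          (fun s => (1+s) ^ (-(1:ℝ)/4)) ta
      rw [hsub]; exact aux_int (by linarith)
    calc (∫ u in ta..tc', ∫ v in tc..ta, |ε u| * |ε v| * ‖(inner ℂ ς (W (u - v) ς) : ℂ)‖)
        ≤ ∫ u in ta..tc', C * (1 + (u - ta)) ^ (-(1:ℝ)/4) :=
          intervalIntegral.integral_mono_on h2 hout (aux_cont2 h2) hinner
      _ = C * ∫ u in ta..tc', (1 + (u - ta)) ^ (-(1:ℝ)/4) := by
          rw [← intervalIntegral.integral_const_mul]
      _ ≤ C * ((4/3) * (1 + (tc' - ta)) ^ ((3:ℝ)/4)) :=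
          mul_le_mul_of_nonneg_left huint hCpos
      _ = C₁ ^ 2 * C₂ * η ^ 2 * (16 / 9) *
          (1 + (tc' - ta)) ^ ((3 : ℝ) / 4) * (1 + (ta - tc)) ^ ((3 : ℝ) / 4) := by
          rw [hC, hK]; ring
  · rw [intervalIntegral.integral_undef hout]
    exact hRHS

end
end
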